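/- For every graph G, the treewidth of G is at most the bridge-depth of G, and the bridge-depth of G is at most the elimination distance of G to a forest plus 1: tw(G) ≤ bd(G) ≤ ed_{𝒢F}(G) + 1. -/

import Mathlib

inductive ElimLE {V : Type} (G : SimpleGraph V) (Base : Set V → Prop) : Set V → ℕ → Prop
  | base (A : Set V) (k : ℕ) (h : Base A) : ElimLE G Base A k
  | step (A : Set V) (k : ℕ)
      (v : (G.induce A).ConnectedComponent → ↥A)
      (hv : ∀ C : (G.induce A).ConnectedComponent, v C ∈ C.supp)
      (h : ∀ C : (G.induce A).ConnectedComponent,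
        ElimLE G Base ((Subtype.val '' C.supp) \ {(v C).val}) k) :
      ElimLE G Base A (k + 1)

/-- The elimination distance of `G` to a forest. -/
noncomputable def edForest {V : Type} (G : SimpleGraph V) : ℕ :=
  sInf {k | ElimLE G (fun A => (G.induce A).IsAcyclic) Set.univ k}
/-- `G` has a tree decomposition of width at most `k`: a tree `R` with bags covering all
vertices and edges of `G`, such that the nodes whose bag contains any fixed vertex induce
a subtree, and every bag has at most `k + 1` vertices. -/
def HasTreeDecompWidthLE {V : Type} (G : SimpleGraph V) (k : ℕ) : Prop :=
  ∃ (ι : Type) (_ : Fintype ι) (R : SimpleGraph ι) (B : ι → Set V),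
    R.Connected ∧ R.IsAcyclic ∧
    (∀ v : V, ∃ i : ι, v ∈ B i) ∧
    (∀ v w : V, G.Adj v w → ∃ i : ι, v ∈ B i ∧ w ∈ B i) ∧
    (∀ v : V, (R.induce {i : ι | v ∈ B i}).Connected) ∧
    (∀ i : ι, (B i).ncard ≤ k + 1)

/-- The treewidth of `G`. -/
noncomputable def treewidth {V : Type} (G : SimpleGraph V) : ℕ :=
  sInf {k | HasTreeDecompWidthLE G k}
/-- `BridgeDepthLE G A k` holds iff the bridge-depth of `G[A]` is at most `k`: either
`A` is empty, or from each connected component one can delete a tree of bridges (a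
nonempty connected induced subgraph all of whose edges are bridges of the component)
so that the remainder has bridge-depth at most `k - 1`. -/
inductive BridgeDepthLE {V : Type} (G : SimpleGraph V) : Set V → ℕ → Prop
  | empty (k : ℕ) : BridgeDepthLE G ∅ k
  | step (A : Set V) (k : ℕ)
      (S : (G.induce A).ConnectedComponent → Set V)
      (hS : ∀ C : (G.induce A).ConnectedComponent, S C ⊆ Subtype.val '' C.supp)
      (hconn : ∀ C : (G.induce A).ConnectedComponent, (G.induce (S C)).Connected)
      (hbr : ∀ (C : (G.induce A).ConnectedComponent) (x y : V)
        (hx : x ∈ S C) (hy : y ∈ S C), G.Adj x y →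
        (G.induce (Subtype.val '' C.supp)).IsBridge s(⟨x, hS C hx⟩, ⟨y, hS C hy⟩))
      (h : ∀ C : (G.induce A).ConnectedComponent,
        BridgeDepthLE G ((Subtype.val '' C.supp) \ S C) k) :
      BridgeDepthLE G A (k + 1)

/-- The bridge-depth of `G`. -/
noncomputable def bridgeDepth {V : Type} (G : SimpleGraph V) : ℕ :=
  sInf {k | BridgeDepthLE G Set.univ k}


namespace TWBD
open SimpleGraph Walk

variable {α : Type}

/-- Walk to the root along a parent function. -/
def chainTo [DecidableEq α] (H : SimpleGraph α) (par : α → α) (rank : α → ℕ) (root : α)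
    (hadj : ∀ x, x ≠ root → H.Adj x (par x))
    (hrank : ∀ x, x ≠ root → rank (par x) < rank x) (x : α) : H.Walk x root :=
  if hx : x = root then Walk.nil.copy hx.symm rfl
  else Walk.cons (hadj x hx) (chainTo H par rank root hadj hrank (par x))
  termination_by rank x
  decreasing_by exact hrank x hx

lemma chainTo_edges [DecidableEq α] (H : SimpleGraph α) (par : α → α) (rank : α → ℕ) (root : α)
    (hadj : ∀ x, x ≠ root → H.Adj x (par x))
    (hrank : ∀ x, x ≠ root → rank (par x) < rank x) (x : α) :
    ∀ e ∈ (chainTo H par rank root hadj hrank x).edges,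
      ∃ z, z ≠ root ∧ e = s(z, par z) ∧ (z = x ∨ rank z < rank x) := by
  by_cases hx : x = root
  · subst hx
    rw [chainTo.eq_def]
    simp
  · rw [chainTo.eq_def, dif_neg hx]
    intro e he
    rw [Walk.edges_cons, List.mem_cons] at he
    rcases he with rfl | he
    · exact ⟨x, hx, rfl, Or.inl rfl⟩
    · obtain ⟨z, hz, heq, hr⟩ := chainTo_edges H par rank root hadj hrank (par x) e he
      refine ⟨z, hz, heq, Or.inr ?_⟩
      rcases hr with rfl | hr
      · exact hrank x hx
      · exact hr.trans (hrank x hx)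
  termination_by rank x
  decreasing_by exact hrank x hx

/-- The graph of a parent function. -/
def pGraph (par : α → α) : SimpleGraph α := SimpleGraph.fromRel (fun a b => par a = b)

lemma pGraph_adj (par : α → α) {a b : α} :
    (pGraph par).Adj a b ↔ a ≠ b ∧ (par a = b ∨ par b = a) := SimpleGraph.fromRel_adj _ _ _

lemma pGraph_adj_par (par : α → α) {rank : α → ℕ} {root : α}
    (hrank : ∀ i, i ≠ root → rank (par i) < rank i) {x : α} (hx : x ≠ root) :
    (pGraph par).Adj x (par x) := by
  rw [pGraph_adj]
  refine ⟨fun h => ?_, Or.inl rfl⟩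
  have := hrank x hx
  rw [← h] at this
  exact lt_irrefl _ this

lemma pGraph_connected (par : α → α) (rank : α → ℕ) (root : α)
    (hrank : ∀ i, i ≠ root → rank (par i) < rank i) : (pGraph par).Connected := by
  haveI : Nonempty α := ⟨root⟩
  classical
  have h := fun x => (chainTo (pGraph par) par rank root
      (fun x hx => pGraph_adj_par par hrank hx) hrank x).reachable
  exact ⟨fun x y => (h x).trans (h y).symm⟩

lemma pGraph_isAcyclic (par : α → α) (rank : α → ℕ) (root : α)
    (hroot : par root = root)
    (hrank : ∀ i, i ≠ root → rank (par i) < rank i) : (pGraph par).IsAcyclic := by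
  classical
  intro v c hc
  obtain ⟨m, hm, hmax⟩ := c.support.toFinset.exists_max_image rank
      ⟨v, List.mem_toFinset.2 c.start_mem_support⟩
  rw [List.mem_toFinset] at hm
  have hmax' : ∀ z ∈ c.support, rank z ≤ rank m := fun z hz =>
    hmax z (List.mem_toFinset.2 hz)
  -- rotate the cycle to start at m
  have hc' : (c.rotate m hm).IsCycle := hc.rotate hm
  have hsup : ∀ z ∈ (c.rotate m hm).support, rank z ≤ rank m := by
    intro z hz
    rw [Walk.mem_support_iff] at hz
    rcases hz with rfl | hz
    · exact le_rfl
    · refine hmax' z ?_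
      have := (Walk.support_rotate c m hm).mem_iff.1 hz
      exact List.mem_of_mem_tail this
  -- analyze the neighbors of m on the rotated cycle
  have hpar_of_adj : ∀ b ∈ (c.rotate m hm).support, (pGraph par).Adj m b → par m = b := by
    intro b hb hadj
    rw [pGraph_adj] at hadj
    obtain ⟨hne, h1 | h1⟩ := hadj
    · exact h1
    · exfalso
      have hbr : b ≠ root := by
        intro h
        rw [h, hroot] at h1
        exact hne (h1.symm.trans h.symm)
      have := hrank b hbr
      rw [h1] at this
      exact absurd (lt_of_lt_of_le this (hsup b hb)) (lt_irrefl _)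
  have main : ∀ (w : (pGraph par).Walk m m), w.IsCycle →
      (∀ z ∈ w.support, rank z ≤ rank m) → False := by
    intro w hw hsupw
    have hpar_of_adj : ∀ b ∈ w.support, (pGraph par).Adj m b → par m = b := by
      intro b hb hadj
      rw [pGraph_adj] at hadj
      obtain ⟨hne, h1 | h1⟩ := hadj
      · exact h1
      · exfalso
        have hbr : b ≠ root := by
          intro h
          rw [h, hroot] at h1
          exact hne (h1.symm.trans h.symm)
        have := hrank b hbr
        rw [h1] at this
        exact absurd (lt_of_lt_of_le this (hsupw b hb)) (lt_irrefl _)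
    cases w with
    | nil => exact hw.ne_nil rfl
    | @cons _ b _ h q =>
      have hb : b ∈ (Walk.cons h q).support := by
        rw [Walk.support_cons]
        exact List.mem_cons_of_mem _ q.start_mem_support
      have hb1 : par m = b := hpar_of_adj b hb h
      cases hq : q.reverse with
      | nil =>
        have : q.reverse.length = 0 := by rw [hq]; rfl
        exact h.ne rfl
      | @cons _ b2 _ h2 q2 =>
        have hb2mem : b2 ∈ (Walk.cons h q).support := by
          rw [Walk.support_cons]
          refine List.mem_cons_of_mem _ ?_
          have : b2 ∈ q.reverse.support := by
            rw [hq, Walk.support_cons]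
            exact List.mem_cons_of_mem _ q2.start_mem_support
          rw [Walk.support_reverse, List.mem_reverse] at this
          exact this
        have hb2 : par m = b2 := hpar_of_adj b2 hb2mem h2
        have hedge : s(m, b) ∈ q.edges := by
          have : s(m, b2) ∈ q.reverse.edges := by
            rw [hq, Walk.edges_cons]
            exact List.mem_cons_self
          rw [Walk.edges_reverse, List.mem_reverse] at this
          rwa [← hb2, hb1] at this
        have htrail : (Walk.cons h q).IsTrail := hw.isCircuit.isTrail
        rw [Walk.isTrail_cons] at htrail
        exact htrail.2 hedge
  exact main (c.rotate m hm) hc' hsup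

lemma pGraph_induce_connected (par : α → α) (rank : α → ℕ) (root : α)
    (hrank : ∀ i, i ≠ root → rank (par i) < rank i) (M : Set α) (m : α) (hm : m ∈ M)
    (hcl : ∀ i ∈ M, i ≠ m → i ≠ root ∧ par i ∈ M) :
    ((pGraph par).induce M).Connected := by
  have key : ∀ (n : ℕ) (x : α) (hx : x ∈ M), rank x ≤ n →
      ((pGraph par).induce M).Reachable ⟨x, hx⟩ ⟨m, hm⟩ := by
    intro n
    induction n with
    | zero =>
      intro x hx hr
      by_cases hxm : x = m
      · subst hxm; exact Reachable.refl _
      · obtain ⟨hxr, _⟩ := hcl x hx hxm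
        exact absurd (lt_of_lt_of_le (hrank x hxr) hr) (Nat.not_lt_zero _)
    | succ n ih =>
      intro x hx hr
      by_cases hxm : x = m
      · subst hxm; exact Reachable.refl _
      · obtain ⟨hxr, hpx⟩ := hcl x hx hxm
        have hadj : ((pGraph par).induce M).Adj ⟨x, hx⟩ ⟨par x, hpx⟩ :=
          pGraph_adj_par par hrank hxr
        exact hadj.reachable.trans
          (ih (par x) hpx (Nat.lt_succ_iff.mp (lt_of_lt_of_le (hrank x hxr) hr)))
  haveI : Nonempty ↥M := ⟨⟨m, hm⟩⟩
  exact ⟨fun a b => (key (rank a.1) a.1 a.2 le_rfl).trans (key (rank b.1) b.1 b.2 le_rfl).symm⟩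

section Induced

variable {V : Type} {G : SimpleGraph V}

lemma supp_image_subset {A : Set V} (C : (G.induce A).ConnectedComponent) :
    Subtype.val '' C.supp ⊆ A := by
  rintro x ⟨y, _, rfl⟩
  exact y.2

lemma reachable_in_supp {A : Set V} (C : (G.induce A).ConnectedComponent) :
    ∀ {x y : ↥A} (_ : (G.induce A).Walk x y) (hx : x ∈ C.supp) (hy : y ∈ C.supp),
    (G.induce (Subtype.val '' C.supp)).Reachable ⟨x.1, ⟨x, hx, rfl⟩⟩ ⟨y.1, ⟨y, hy, rfl⟩⟩ := by
  intro x y p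
  induction p with
  | nil => intro hx hy; exact Reachable.refl _
  | @cons a z w h q ih =>
    intro hx hy
    have hz : z ∈ C.supp := by
      rw [SimpleGraph.ConnectedComponent.mem_supp_iff] at hx ⊢
      exact (SimpleGraph.ConnectedComponent.sound h.symm.reachable).trans hx
    have hadj : (G.induce (Subtype.val '' C.supp)).Adj ⟨a.1, ⟨a, hx, rfl⟩⟩ ⟨z.1, ⟨z, hz, rfl⟩⟩ := h
    exact hadj.reachable.trans (ih hz hy)

lemma induce_supp_connected (A : Set V) (C : (G.induce A).ConnectedComponent) :
    (G.induce (Subtype.val '' C.supp)).Connected := by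
  obtain ⟨x, hx⟩ := C.exists_rep
  have hx' : x ∈ C.supp := hx
  haveI : Nonempty ↥(Subtype.val '' C.supp) := ⟨⟨x.1, ⟨x, hx', rfl⟩⟩⟩
  refine ⟨fun a b => ?_⟩
  obtain ⟨a1, ha⟩ := a
  obtain ⟨b1, hb⟩ := b
  obtain ⟨ua, hua, rfl⟩ := ha
  obtain ⟨ub, hub, rfl⟩ := hb
  have hr : (G.induce A).Reachable ua ub := SimpleGraph.ConnectedComponent.exact
    (((SimpleGraph.ConnectedComponent.mem_supp_iff _ _).1 hua).trans
      (((SimpleGraph.ConnectedComponent.mem_supp_iff _ _).1 hub)).symm)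
  obtain ⟨p⟩ := hr
  exact reachable_in_supp C p hua hub

lemma isAcyclic_induce_of_subset {A B : Set V} (h : B ⊆ A) (hA : (G.induce A).IsAcyclic) :
    (G.induce B).IsAcyclic := by
  intro v c hc
  exact hA _ (hc.map (f := (G.induceHomOfLE h).toHom)
    (G.induceHomOfLE h).injective)

lemma comp_eq_of_mem {A : Set V} {C D : (G.induce A).ConnectedComponent} {v : V}
    (h1 : v ∈ Subtype.val '' C.supp) (h2 : v ∈ Subtype.val '' D.supp) : C = D := by
  obtain ⟨x, hx, rfl⟩ := h1
  obtain ⟨y, hy, hxy⟩ := h2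
  have hxe : x = y := Subtype.ext hxy.symm
  subst hxe
  rw [SimpleGraph.ConnectedComponent.mem_supp_iff] at hx hy
  exact hx.symm.trans hy

lemma mem_own_supp {A : Set V} (x : ↥A) :
    x.1 ∈ Subtype.val '' ((G.induce A).connectedComponentMk x).supp :=
  ⟨x, rfl, rfl⟩

end Induced

lemma exists_rooting {α : Type} (H : SimpleGraph α) (hc : H.Connected) (r : α) :
    ∃ (par : α → α) (rank : α → ℕ), par r = r ∧ rank r = 0 ∧
      ∀ x, x ≠ r → H.Adj x (par x) ∧ rank (par x) < rank x := by
  classical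
  have key : ∀ x, x ≠ r → ∃ y, H.Adj x y ∧ H.dist r y < H.dist r x := by
    intro x hx
    obtain ⟨p, hp⟩ := (hc.preconnected x r).exists_walk_length_eq_dist
    cases p with
    | nil => exact absurd rfl hx
    | @cons _ y _ h q =>
      refine ⟨y, h, ?_⟩
      have h1 : H.dist r y ≤ q.length := by
        rw [SimpleGraph.dist_comm]
        exact SimpleGraph.dist_le q
      have h2 : H.dist r x = q.length + 1 := by
        rw [SimpleGraph.dist_comm, ← hp, SimpleGraph.Walk.length_cons]
      omega
  refine ⟨fun x => if hx : x = r then r else (key x hx).choose, fun x => H.dist r x,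
    by simp, SimpleGraph.dist_self, ?_⟩
  intro x hx
  simp only [dif_neg hx]
  exact ⟨(key x hx).choose_spec.1, (key x hx).choose_spec.2⟩

section Bridge

variable {V : Type} {G : SimpleGraph V} {W Sc : Set V}

lemma parent_edge (hSW : Sc ⊆ W)
    (hbr : ∀ (x y : V) (hx : x ∈ Sc) (hy : y ∈ Sc), G.Adj x y →
      (G.induce W).IsBridge s(⟨x, hSW hx⟩, ⟨y, hSW hy⟩))
    (par : ↥Sc → ↥Sc) (rank : ↥Sc → ℕ) (r : ↥Sc)
    (hpar : ∀ x, x ≠ r → (G.induce Sc).Adj x (par x) ∧ rank (par x) < rank x)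
    {s t : ↥Sc} (hadj : (G.induce Sc).Adj s t) : par s = t ∨ par t = s := by
  classical
  by_contra hcon
  push_neg at hcon
  obtain ⟨h1, h2⟩ := hcon
  have hGadj : G.Adj s.1 t.1 := hadj
  have hbridge := hbr s.1 t.1 s.2 t.2 hGadj
  rw [SimpleGraph.isBridge_iff_adj_and_forall_walk_mem_edges] at hbridge
  have hall := hbridge
  set f := (G.induceHomOfLE hSW).toHom with hf
  have hval : ∀ (z : ↥Sc) (w : ↥W), f z = w → z.1 = w.1 := by
    intro z w h
    rw [← h, hf]
    rfl
  set ch := chainTo (G.induce Sc) par rank r (fun x hx => (hpar x hx).1)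
      (fun x hx => (hpar x hx).2) with hch
  have hP := hall (((ch s).map f).append ((ch t).map f).reverse)
  erw [SimpleGraph.Walk.edges_append, List.mem_append, SimpleGraph.Walk.edges_reverse,
    List.mem_reverse] at hP
  rcases hP with hP | hP <;>
  · erw [SimpleGraph.Walk.edges_map, List.mem_map] at hP
    obtain ⟨e, he, heq⟩ := hP
    obtain ⟨z, hzr, rfl, -⟩ := chainTo_edges _ _ _ _ _ _ _ e he
    rw [Sym2.map_pair_eq, Sym2.eq_iff] at heq
    rcases heq with ⟨hz1, hz2⟩ | ⟨hz1, hz2⟩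
    · have hzs : z = s := Subtype.ext (hval _ _ hz1)
      subst hzs
      exact h1 (Subtype.ext (hval _ _ hz2))
    · have hzt : z = t := Subtype.ext (hval _ _ hz1)
      subst hzt
      exact h2 (Subtype.ext (hval _ _ hz2))

lemma crux_aux (hSW : Sc ⊆ W)
    (hbr : ∀ (x y : V) (hx : x ∈ Sc) (hy : y ∈ Sc), G.Adj x y →
      (G.induce W).IsBridge s(⟨x, hSW hx⟩, ⟨y, hSW hy⟩))
    (par : ↥Sc → ↥Sc) (rank : ↥Sc → ℕ) (r : ↥Sc) (hrank_r : rank r = 0)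
    (hpar : ∀ x, x ≠ r → (G.induce Sc).Adj x (par x) ∧ rank (par x) < rank x)
    {x y : ↥(W \ Sc)} (hreach : (G.induce (W \ Sc)).Reachable x y)
    {s t : ↥Sc} (hxs : G.Adj x.1 s.1) (hyt : G.Adj y.1 t.1)
    (hne : s ≠ t) (hle : rank t ≤ rank s) : False := by
  classical
  have hsr : s ≠ r := by
    intro h
    have ht0 : rank t = 0 := by rw [h, hrank_r] at hle; omega
    have htr : t = r := by
      by_contra htr
      have := (hpar t htr).2
      omega
    exact hne (h.trans htr.symm)
  obtain ⟨hadj_sp, hrank_sp⟩ := hpar s hsr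
  have hbridge := hbr s.1 (par s).1 s.2 (par s).2 hadj_sp
  rw [SimpleGraph.isBridge_iff_adj_and_forall_walk_mem_edges] at hbridge
  have hall := hbridge
  set f := (G.induceHomOfLE hSW).toHom with hf
  set g := (G.induceHomOfLE (Set.diff_subset : W \ Sc ⊆ W)).toHom with hg
  have hval : ∀ (z : ↥Sc) (w : ↥W), f z = w → z.1 = w.1 := by
    intro z w h
    rw [← h, hf]
    rfl
  set ch := chainTo (G.induce Sc) par rank r (fun u hu => (hpar u hu).1)
      (fun u hu => (hpar u hu).2) with hch
  obtain ⟨p⟩ := hreach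
  have hadj1 : (G.induce W).Adj ⟨s.1, hSW s.2⟩ (g x) := hxs.symm
  have hadj2 : (G.induce W).Adj (g y) ⟨t.1, hSW t.2⟩ := hyt
  have hP := hall (SimpleGraph.Walk.cons hadj1 ((p.map g).append
      (SimpleGraph.Walk.cons hadj2 (((ch t).map f).append (((ch (par s)).map f).reverse)))))
  have hmemE : ∀ c : ↥W, c ∈ (s(⟨s.1, hSW s.2⟩, ⟨(par s).1, hSW (par s).2⟩) : Sym2 ↥W) →
      c.1 ∈ Sc := by
    intro c hc
    rw [Sym2.mem_iff] at hc
    rcases hc with rfl | rfl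
    · exact s.2
    · exact (par s).2
  erw [SimpleGraph.Walk.edges_cons, SimpleGraph.Walk.edges_append, SimpleGraph.Walk.edges_cons,
    SimpleGraph.Walk.edges_append, SimpleGraph.Walk.edges_reverse] at hP
  simp only [SimpleGraph.Walk.edges_cons, SimpleGraph.Walk.edges_append,
    SimpleGraph.Walk.edges_reverse, List.mem_cons, List.mem_append, List.mem_reverse] at hP
  rcases hP with hP | hP | hP | hP | hP
  · -- E = s(s, g x)
    have : g x ∈ (s(⟨s.1, hSW s.2⟩, ⟨(par s).1, hSW (par s).2⟩) : Sym2 ↥W) := by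
      rw [hP]
      exact Sym2.mem_mk_right _ _
    exact x.2.2 (hmemE _ this)
  · -- E ∈ (p.map g).edges
    erw [SimpleGraph.Walk.edges_map, List.mem_map] at hP
    obtain ⟨e, he, heq⟩ := hP
    have hc : g e.out.1 ∈ (s(⟨s.1, hSW s.2⟩, ⟨(par s).1, hSW (par s).2⟩) : Sym2 ↥W) := by
      rw [← heq]
      exact Sym2.mem_map.2 ⟨e.out.1, Sym2.out_fst_mem e, rfl⟩
    exact e.out.1.2.2 (hmemE _ hc)
  · -- E = s(g y, t)
    have : g y ∈ (s(⟨s.1, hSW s.2⟩, ⟨(par s).1, hSW (par s).2⟩) : Sym2 ↥W) := by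
      rw [hP]
      exact Sym2.mem_mk_left _ _
    exact y.2.2 (hmemE _ this)
  · -- E ∈ (ch t).map f edges
    erw [SimpleGraph.Walk.edges_map, List.mem_map] at hP
    obtain ⟨e, he, heq⟩ := hP
    obtain ⟨z, hzr, rfl, hzt⟩ := chainTo_edges _ _ _ _ _ _ _ e he
    rw [Sym2.map_pair_eq, Sym2.eq_iff] at heq
    rcases heq with ⟨hz1, hz2⟩ | ⟨hz1, hz2⟩
    · have hzs : z = s := Subtype.ext (hval _ _ hz1)
      subst hzs
      rcases hzt with h' | h'
      · exact hne h'
      · omega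
    · have hzp : z = par s := Subtype.ext (hval _ _ hz1)
      have hpz : par z = s := Subtype.ext (hval _ _ hz2)
      have h3 := (hpar z hzr).2
      rw [hpz, hzp] at h3
      omega
  · -- E ∈ (ch (par s)).map f edges
    erw [SimpleGraph.Walk.edges_map, List.mem_map] at hP
    obtain ⟨e, he, heq⟩ := hP
    obtain ⟨z, hzr, rfl, hzps⟩ := chainTo_edges _ _ _ _ _ _ _ e he
    have hzle : rank z ≤ rank (par s) := by
      rcases hzps with rfl | h'
      · exact le_rfl
      · exact h'.le
    rw [Sym2.map_pair_eq, Sym2.eq_iff] at heq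
    rcases heq with ⟨hz1, hz2⟩ | ⟨hz1, hz2⟩
    · have hzs : z = s := Subtype.ext (hval _ _ hz1)
      subst hzs
      omega
    · have hzp : z = par s := Subtype.ext (hval _ _ hz1)
      have hpz : par z = s := Subtype.ext (hval _ _ hz2)
      have h3 := (hpar z hzr).2
      rw [hpz, hzp] at h3
      omega

end Bridge

section PTDdef

variable {V : Type}

/-- Tree decomposition of `G[A]` (bags living in `V`), where the tree is given by a
parent function with decreasing rank, and the subtree condition is expressed by
closure of the set of bags containing a vertex under the parent function. -/
@[reducible] def PTD (G : SimpleGraph V) (A : Set V) (k : ℕ) : Prop :=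
  ∃ (ι : Type) (par : ι → ι) (rank : ι → ℕ) (root : ι) (B : ι → Set V),
    Finite ι ∧ par root = root ∧ (∀ i, i ≠ root → rank (par i) < rank i) ∧
    (∀ i, B i ⊆ A) ∧
    (∀ v ∈ A, ∃ i, v ∈ B i) ∧
    (∀ v w : V, v ∈ A → w ∈ A → G.Adj v w → ∃ i, v ∈ B i ∧ w ∈ B i) ∧
    (∀ v ∈ A, ∃ m, v ∈ B m ∧ ∀ i, v ∈ B i → i ≠ m → i ≠ root ∧ v ∈ B (par i)) ∧
    (∀ i, (B i).ncard ≤ k + 1)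

end PTDdef

section Main

variable {V : Type} [Fintype V] {G : SimpleGraph V}

lemma bd_ptd {A : Set V} {k : ℕ} (h : BridgeDepthLE G A k) :
    ∀ C : (G.induce A).ConnectedComponent, PTD G (Subtype.val '' C.supp) k := by
  classical
  induction h with
  | empty k =>
    intro C
    exfalso
    obtain ⟨x, -⟩ := C.exists_rep
    exact x.2
  | step A k S hS hconn hbr hrec IH =>
    intro C
    have hSW : S C ⊆ Subtype.val '' C.supp := hS C
    set W := Subtype.val '' C.supp with hWdef
    set Sc := S C with hScdef
    have hbrC : ∀ (x y : V) (hx : x ∈ Sc) (hy : y ∈ Sc), G.Adj x y →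
        (G.induce W).IsBridge s(⟨x, hSW hx⟩, ⟨y, hSW hy⟩) := hbr C
    have hconnC : (G.induce Sc).Connected := hconn C
    obtain ⟨r0⟩ := hconnC.nonempty
    obtain ⟨par0, rank0, hpar_r, hrank_r, hpar0⟩ := exists_rooting _ hconnC r0
    set A' := W \ Sc with hA'def
    -- every component of the remainder attaches to a unique vertex of Sc
    have hATT : ∀ D : (G.induce A').ConnectedComponent, ∃ u : ↥Sc, ∀ (x : ↥A'),
        x.1 ∈ Subtype.val '' D.supp → ∀ (s : ↥Sc), G.Adj x.1 s.1 → s = u := by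
      intro D
      by_cases hex : ∃ (x : ↥A') (s : ↥Sc), x.1 ∈ Subtype.val '' D.supp ∧ G.Adj x.1 s.1
      · obtain ⟨x0, s0, hx0, hadj0⟩ := hex
        refine ⟨s0, fun x hx s hadj => ?_⟩
        by_contra hne
        have hxD : x ∈ D.supp := by
          obtain ⟨x', hx', hval⟩ := hx
          rwa [Subtype.ext hval] at hx'
        have hx0D : x0 ∈ D.supp := by
          obtain ⟨x', hx', hval⟩ := hx0
          rwa [Subtype.ext hval] at hx'
        have hreach : (G.induce A').Reachable x x0 :=
          SimpleGraph.ConnectedComponent.exact (hxD.trans hx0D.symm)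
        rcases le_total (rank0 s0) (rank0 s) with hle | hle
        · exact TWBD.crux_aux hSW hbrC par0 rank0 r0 hrank_r hpar0 hreach hadj hadj0 hne hle
        · exact TWBD.crux_aux hSW hbrC par0 rank0 r0 hrank_r hpar0 hreach.symm hadj0 hadj
            (Ne.symm hne) hle
      · push_neg at hex
        exact ⟨r0, fun x hx s hadj => absurd hadj (hex x s hx)⟩
    choose u hu using hATT
    have hpedge : ∀ s t : ↥Sc, (G.induce Sc).Adj s t → par0 s = t ∨ par0 t = s :=
      fun s t hadj => TWBD.parent_edge hSW hbrC par0 rank0 r0 hpar0 hadj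
    choose ι par rank root B hfin hroot hrank hsub hcov hedge hsubtree hsize using IH C
    obtain ⟨N, hN⟩ : ∃ N, ∀ s : ↥Sc, rank0 s ≤ N := by
      obtain ⟨N, hN⟩ := (Set.finite_range rank0).bddAbove
      exact ⟨N, fun s => hN (Set.mem_range_self s)⟩
    -- assemble the glued parent structure
    refine ⟨(↥Sc) ⊕ (Σ D : (G.induce A').ConnectedComponent, ι D),
      Sum.elim (fun s => Sum.inl (par0 s))
        (fun d => if d.2 = root d.1 then Sum.inl (u d.1) else Sum.inr ⟨d.1, par d.1 d.2⟩),
      Sum.elim rank0 (fun d => rank d.1 d.2 + N + 1),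
      Sum.inl r0,
      Sum.elim (fun s => {s.1, (par0 s).1}) (fun d => B d.1 d.2 ∪ {(u d.1).1}),
      ?_, ?_, ?_, ?_, ?_, ?_, ?_, ?_⟩
    · -- finiteness
      letI : ∀ D, Finite (ι D) := hfin
      infer_instance
    · -- root fixed
      simp [hpar_r]
    · -- rank decreasing
      rintro (s | ⟨D, j⟩) hi
      · have hs : s ≠ r0 := fun h => hi (by rw [h])
        simpa using (hpar0 s hs).2
      · by_cases hj : j = root D
        · subst hj
          simp only [Sum.elim_inr, Sum.elim_inl, if_true, eq_self_iff_true, ite_true]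
          have := hN (u D)
          omega
        · simp only [Sum.elim_inr, if_neg hj]
          have := hrank D j hj
          omega
    · -- bags inside W
      rintro (s | ⟨D, j⟩)
      · intro z hz
        rcases hz with rfl | hz
        · exact hSW s.2
        · rw [Set.mem_singleton_iff] at hz
          subst hz
          exact hSW (par0 s).2
      · intro z hz
        rcases hz with hz | hz
        · exact (TWBD.supp_image_subset D (hsub D j hz)).1
        · rw [Set.mem_singleton_iff] at hz
          subst hz
          exact hSW (u D).2
    · -- coverage
      intro v hv
      by_cases hvS : v ∈ Sc
      · exact ⟨Sum.inl ⟨v, hvS⟩, Or.inl rfl⟩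
      · have hvA' : v ∈ A' := ⟨hv, hvS⟩
        set x : ↥A' := ⟨v, hvA'⟩
        obtain ⟨j, hj⟩ := hcov ((G.induce A').connectedComponentMk x) v (TWBD.mem_own_supp x)
        exact ⟨Sum.inr ⟨_, j⟩, Or.inl hj⟩
    · -- edges covered
      intro v w hv hw hadj
      by_cases hvS : v ∈ Sc <;> by_cases hwS : w ∈ Sc
      · have hadj' : (G.induce Sc).Adj ⟨v, hvS⟩ ⟨w, hwS⟩ := hadj
        rcases hpedge _ _ hadj' with hp | hp
        · refine ⟨Sum.inl ⟨v, hvS⟩, Or.inl rfl, Or.inr ?_⟩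
          rw [hp]
          rfl
        · refine ⟨Sum.inl ⟨w, hwS⟩, Or.inr ?_, Or.inl rfl⟩
          rw [hp]
          rfl
      · -- v ∈ Sc, w ∉ Sc
        have hwA' : w ∈ A' := ⟨hw, hwS⟩
        set x : ↥A' := ⟨w, hwA'⟩
        set D := (G.induce A').connectedComponentMk x with hD
        have huD : (⟨v, hvS⟩ : ↥Sc) = u D := hu D x (TWBD.mem_own_supp x) ⟨v, hvS⟩ hadj.symm
        obtain ⟨j, hj⟩ := hcov D w (TWBD.mem_own_supp x)
        refine ⟨Sum.inr ⟨D, j⟩, Or.inr ?_, Or.inl hj⟩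
        rw [Set.mem_singleton_iff, ← huD]
      · -- v ∉ Sc, w ∈ Sc
        have hvA' : v ∈ A' := ⟨hv, hvS⟩
        set x : ↥A' := ⟨v, hvA'⟩
        set D := (G.induce A').connectedComponentMk x with hD
        have huD : (⟨w, hwS⟩ : ↥Sc) = u D := hu D x (TWBD.mem_own_supp x) ⟨w, hwS⟩ hadj
        obtain ⟨j, hj⟩ := hcov D v (TWBD.mem_own_supp x)
        refine ⟨Sum.inr ⟨D, j⟩, Or.inl hj, Or.inr ?_⟩
        rw [Set.mem_singleton_iff, ← huD]
      · -- both in A'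
        have hvA' : v ∈ A' := ⟨hv, hvS⟩
        have hwA' : w ∈ A' := ⟨hw, hwS⟩
        set x : ↥A' := ⟨v, hvA'⟩
        set y : ↥A' := ⟨w, hwA'⟩
        set D := (G.induce A').connectedComponentMk x with hD
        have hadj' : (G.induce A').Adj x y := hadj
        have hyD : y ∈ D.supp :=
          (SimpleGraph.ConnectedComponent.sound hadj'.symm.reachable)
        obtain ⟨j, hj1, hj2⟩ := hedge D v w (TWBD.mem_own_supp x) ⟨y, hyD, rfl⟩ hadj
        exact ⟨Sum.inr ⟨D, j⟩, Or.inl hj1, Or.inl hj2⟩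
    · -- subtree condition
      intro v hv
      by_cases hvS : v ∈ Sc
      · refine ⟨Sum.inl ⟨v, hvS⟩, Or.inl rfl, ?_⟩
        rintro (c | ⟨D, j⟩) hvB hne
        · -- bag of a vertex node of Sc
          rcases hvB with hvc | hvc
          · exact absurd (by rw [show c = (⟨v, hvS⟩ : ↥Sc) from Subtype.ext hvc.symm]) hne
          · rw [Set.mem_singleton_iff] at hvc
            have hpc : par0 c = ⟨v, hvS⟩ := Subtype.ext hvc.symm
            have hcr : c ≠ r0 := by
              intro hc
              subst hc
              rw [hpar_r] at hpc
              exact hne (congrArg Sum.inl hpc)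
            refine ⟨fun h => ?_, ?_⟩
            · exact hcr (Sum.inl.inj h)
            · simp only [Sum.elim_inl, hpc]
              exact Or.inl rfl
        · -- bag of a component node
          have hvu : v = (u D).1 := by
            rcases hvB with hvB | hvB
            · exact absurd hvS ((TWBD.supp_image_subset D (hsub D j hvB)).2)
            · exact hvB
          refine ⟨fun h => (nomatch h), ?_⟩
          by_cases hj : j = root D
          · simp only [Sum.elim_inr, hj, if_pos rfl, Sum.elim_inl]
            exact Or.inl hvu
          · simp only [Sum.elim_inr, if_neg hj]
            exact Or.inr hvu
      · -- v in the remainder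
        have hvA' : v ∈ A' := ⟨hv, hvS⟩
        set x : ↥A' := ⟨v, hvA'⟩
        set D := (G.induce A').connectedComponentMk x with hD
        obtain ⟨m0, hm0, hcl0⟩ := hsubtree D v (TWBD.mem_own_supp x)
        refine ⟨Sum.inr ⟨D, m0⟩, Or.inl hm0, ?_⟩
        rintro (c | ⟨D', j⟩) hvB hne
        · exfalso
          rcases hvB with hvc | hvc
          · exact hvS (by rw [hvc]; exact c.2)
          · rw [Set.mem_singleton_iff] at hvc
            exact hvS (by rw [hvc]; exact (par0 c).2)
        · have hvBj : v ∈ B D' j := by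
            rcases hvB with hvB | hvB
            · exact hvB
            · rw [Set.mem_singleton_iff] at hvB
              exact absurd (show v ∈ Sc by rw [hvB]; exact (u D').2) hvS
          have hDD : D' = D := TWBD.comp_eq_of_mem (hsub D' j hvBj) (TWBD.mem_own_supp x)
          subst hDD
          have hjm : j ≠ m0 := by
            intro hj
            exact hne (by rw [hj])
          obtain ⟨hjr, hvpar⟩ := hcl0 j hvBj hjm
          refine ⟨fun h => (nomatch h), ?_⟩
          simp only [Sum.elim_inr, if_neg hjr]
          exact Or.inl hvpar
    · -- bag sizes
      rintro (s | ⟨D, j⟩)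
      · simp only [Sum.elim_inl]
        calc ({s.1, (par0 s).1} : Set V).ncard ≤ ({(par0 s).1} : Set V).ncard + 1 :=
              Set.ncard_insert_le _ _
          _ ≤ k + 1 + 1 := by rw [Set.ncard_singleton]; omega
      · simp only [Sum.elim_inr]
        rw [Set.union_singleton]
        calc (insert (u D).1 (B D j)).ncard ≤ (B D j).ncard + 1 := Set.ncard_insert_le _ _
          _ ≤ k + 1 + 1 := by have := hsize D j; omega


lemma elim_bd {A : Set V} {k : ℕ}
    (h : ElimLE G (fun B => (G.induce B).IsAcyclic) A k) : BridgeDepthLE G A (k + 1) := by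
  induction h with
  | base A k hbase =>
    refine BridgeDepthLE.step A k (fun C => Subtype.val '' C.supp) (fun C => subset_rfl)
      (fun C => TWBD.induce_supp_connected A C) ?_ ?_
    · intro C x y hx hy hadj
      have hacy : (G.induce (Subtype.val '' C.supp)).IsAcyclic :=
        TWBD.isAcyclic_induce_of_subset (TWBD.supp_image_subset C) hbase
      exact SimpleGraph.isAcyclic_iff_forall_adj_isBridge.mp hacy
        (show (G.induce (Subtype.val '' C.supp)).Adj ⟨x, _⟩ ⟨y, _⟩ from hadj)
    · intro C
      rw [Set.diff_self]
      exact BridgeDepthLE.empty k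
  | step A k v hv hrec IH =>
    refine BridgeDepthLE.step A (k + 1) (fun C => {(v C).1})
      (fun C => ?_) (fun C => ?_) (fun C x y hx hy hadj => ?_) (fun C => IH C)
    · intro z hz
      rw [Set.mem_singleton_iff] at hz
      subst hz
      exact ⟨v C, hv C, rfl⟩
    · haveI : Nonempty ↥({(v C).1} : Set V) := ⟨⟨(v C).1, rfl⟩⟩
      refine ⟨fun a b => ?_⟩
      have hab : a = b := Subtype.ext (a.2.trans b.2.symm)
      rw [hab]
    · exfalso
      rw [Set.mem_singleton_iff] at hx hy
      exact hadj.ne (hx.trans hy.symm)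

lemma elim_of_card {k : ℕ} : ∀ (A : Set V), A.ncard ≤ k →
    ElimLE G (fun B => (G.induce B).IsAcyclic) A k := by
  induction k with
  | zero =>
    intro A hA
    have hA0 : A = ∅ := (Set.ncard_eq_zero A.toFinite).mp (Nat.le_zero.mp hA)
    subst hA0
    refine ElimLE.base _ _ ?_
    intro v c hc
    exact absurd v.2 (Set.notMem_empty _)
  | succ k ih =>
    intro A hA
    refine ElimLE.step A k (fun C => C.exists_rep.choose) (fun C => ?_) (fun C => ?_)
    · have := C.exists_rep.choose_spec
      rwa [SimpleGraph.ConnectedComponent.mem_supp_iff]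
    · apply ih
      set x := C.exists_rep.choose with hx
      have hsub : (Subtype.val '' C.supp) \ {x.1} ⊆ A \ {x.1} :=
        fun z hz => ⟨TWBD.supp_image_subset C hz.1, hz.2⟩
      calc ((Subtype.val '' C.supp) \ {x.1}).ncard ≤ (A \ {x.1}).ncard :=
            Set.ncard_le_ncard hsub (A \ {x.1}).toFinite
        _ ≤ k := by
            rw [Set.ncard_diff_singleton_of_mem x.2]
            omega

lemma glue_top {k : ℕ} (h : BridgeDepthLE G Set.univ k) : HasTreeDecompWidthLE G k := by
  classical
  have hP := bd_ptd h
  choose ι par rank root B hfin hroot hrank hsub hcov hedge hsubtree hsize using hP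
  letI : ∀ C, Finite (ι C) := hfin
  set P : (Unit ⊕ (Σ C : (G.induce (Set.univ : Set V)).ConnectedComponent, ι C)) →
      (Unit ⊕ (Σ C : (G.induce (Set.univ : Set V)).ConnectedComponent, ι C)) :=
    Sum.elim (fun _ => Sum.inl ())
      (fun d => if d.2 = root d.1 then Sum.inl () else Sum.inr ⟨d.1, par d.1 d.2⟩) with hPdef
  set RK : (Unit ⊕ (Σ C : (G.induce (Set.univ : Set V)).ConnectedComponent, ι C)) → ℕ :=
    Sum.elim (fun _ => 0) (fun d => rank d.1 d.2 + 1) with hRKdef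
  have hrank' : ∀ i, i ≠ Sum.inl () → RK (P i) < RK i := by
    rintro (u | ⟨Co, j⟩) hi
    · exact absurd rfl hi
    · by_cases hj : j = root Co
      · subst hj
        simp only [hPdef, hRKdef, Sum.elim_inr, Sum.elim_inl, if_true, eq_self_iff_true, ite_true]
        omega
      · simp only [hPdef, hRKdef, Sum.elim_inr, if_neg hj]
        have := hrank Co j hj
        omega
  have hroot' : P (Sum.inl ()) = Sum.inl () := rfl
  refine ⟨Unit ⊕ (Σ C : (G.induce (Set.univ : Set V)).ConnectedComponent, ι C),
    Fintype.ofFinite _, TWBD.pGraph P,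
    Sum.elim (fun _ => (∅ : Set V)) (fun d => B d.1 d.2),
    TWBD.pGraph_connected P RK (Sum.inl ()) hrank',
    TWBD.pGraph_isAcyclic P RK (Sum.inl ()) hroot' hrank', ?_, ?_, ?_, ?_⟩
  · -- coverage
    intro v
    set x : ↥(Set.univ : Set V) := ⟨v, Set.mem_univ v⟩
    obtain ⟨j, hj⟩ := hcov ((G.induce Set.univ).connectedComponentMk x) v (TWBD.mem_own_supp x)
    exact ⟨Sum.inr ⟨_, j⟩, hj⟩
  · -- edges
    intro v w hadj
    set x : ↥(Set.univ : Set V) := ⟨v, Set.mem_univ v⟩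
    set y : ↥(Set.univ : Set V) := ⟨w, Set.mem_univ w⟩
    have hadj' : (G.induce Set.univ).Adj x y := hadj
    have hy : y ∈ ((G.induce Set.univ).connectedComponentMk x).supp :=
      SimpleGraph.ConnectedComponent.sound hadj'.symm.reachable
    obtain ⟨j, hj1, hj2⟩ := hedge ((G.induce Set.univ).connectedComponentMk x) v w
      (TWBD.mem_own_supp x) ⟨y, hy, rfl⟩ hadj
    exact ⟨Sum.inr ⟨_, j⟩, hj1, hj2⟩
  · -- subtree condition
    intro v
    set x : ↥(Set.univ : Set V) := ⟨v, Set.mem_univ v⟩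
    obtain ⟨m0, hm0, hcl0⟩ := hsubtree ((G.induce Set.univ).connectedComponentMk x) v
      (TWBD.mem_own_supp x)
    refine TWBD.pGraph_induce_connected P RK (Sum.inl ()) hrank' _
      (Sum.inr ⟨(G.induce Set.univ).connectedComponentMk x, m0⟩) hm0 ?_
    rintro (u | ⟨C', j⟩) hi hne
    · exact absurd hi (Set.notMem_empty v)
    · have hi' : v ∈ B C' j := hi
      have hDD : C' = (G.induce Set.univ).connectedComponentMk x :=
        TWBD.comp_eq_of_mem (hsub C' j hi') (TWBD.mem_own_supp x)
      subst hDD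
      have hjm : j ≠ m0 := fun hj => hne (by rw [hj])
      obtain ⟨hjr, hvpar⟩ := hcl0 j hi' hjm
      refine ⟨fun hcon => (nomatch hcon), ?_⟩
      simp only [hPdef, Sum.elim_inr, if_neg hjr]
      exact hvpar
  · -- sizes
    rintro (u | ⟨Co, j⟩)
    · simp only [Sum.elim_inl, Set.ncard_empty]
      omega
    · exact hsize Co j

end Main

end TWBD

theorem stmt3 (V : Type) [Fintype V] (G : SimpleGraph V) :
    treewidth G ≤ bridgeDepth G ∧ bridgeDepth G ≤ edForest G + 1 := by
  have hE : ElimLE G (fun A => (G.induce A).IsAcyclic) Set.univ (Fintype.card V) :=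
    TWBD.elim_of_card Set.univ
      (by rw [Set.ncard_univ]; exact le_of_eq Nat.card_eq_fintype_card)
  constructor
  · have hne : {k | BridgeDepthLE G Set.univ k}.Nonempty :=
      ⟨Fintype.card V + 1, TWBD.elim_bd hE⟩
    have hmem : BridgeDepthLE G Set.univ (bridgeDepth G) := Nat.sInf_mem hne
    exact Nat.sInf_le (TWBD.glue_top hmem)
  · have hne : {k | ElimLE G (fun A => (G.induce A).IsAcyclic) Set.univ k}.Nonempty :=
      ⟨Fintype.card V, hE⟩
    have hmem : ElimLE G (fun A => (G.induce A).IsAcyclic) Set.univ (edForest G) :=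
      Nat.sInf_mem hne
    exact Nat.sInf_le (TWBD.elim_bd hmem)
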